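/- Let s_1 > 0 > s_2. Then the Fourier transform F : H^{s_1}(ℝ^n) → H^{s_2}(ℝ^n) is a compact operator. -/

import Mathlib

open MeasureTheory Complex Real ENNReal NNReal Filter

noncomputable section

/-- The Fourier transform `(Fφ)(ξ) = (2π)^{-n/2} ∫ e^{-i x·ξ} φ(x) dx` on `ℝⁿ`. -/
def FT (n : ℕ) (f : EuclideanSpace ℝ (Fin n) → ℂ) :
    EuclideanSpace ℝ (Fin n) → ℂ := fun ξ =>
  ((2 * Real.pi) ^ (-(n : ℝ) / 2) : ℝ) •
    ∫ x : EuclideanSpace ℝ (Fin n),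
      Complex.exp (-Complex.I * ((inner ℝ x ξ : ℝ) : ℂ)) * f x

/-- The weight `w_s(x) = (1 + |x|²)^{s/2}`. -/
def wgt (n : ℕ) (s : ℝ) (x : EuclideanSpace ℝ (Fin n)) : ℝ :=
  (1 + ‖x‖ ^ 2) ^ (s / 2)

namespace FCaux

variable {n : ℕ} {s : ℝ}

lemma base_pos (x : EuclideanSpace ℝ (Fin n)) : (0:ℝ) < 1 + ‖x‖ ^ 2 := by positivity

lemma wgt_pos (x : EuclideanSpace ℝ (Fin n)) : 0 < wgt n s x :=
  Real.rpow_pos_of_pos (base_pos x) _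

lemma continuous_wgt : Continuous (wgt n s) := by
  apply Continuous.rpow_const (by continuity)
  exact fun x => Or.inl (ne_of_gt (base_pos x))

lemma norm_wgt_mul (x : EuclideanSpace ℝ (Fin n)) (z : ℂ) :
    ‖(wgt n s x : ℂ) * z‖ = wgt n s x * ‖z‖ := by
  rw [norm_mul, Complex.norm_real, Real.norm_eq_abs, abs_of_pos (wgt_pos x)]

lemma wgt_le_one (hs : s ≤ 0) (x : EuclideanSpace ℝ (Fin n)) : wgt n s x ≤ 1 :=
  Real.rpow_le_one_of_one_le_of_nonpos (by nlinarith [sq_nonneg ‖x‖]) (by linarith)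

lemma one_le_wgt (hs : 0 ≤ s) (x : EuclideanSpace ℝ (Fin n)) : 1 ≤ wgt n s x :=
  Real.one_le_rpow (by nlinarith [sq_nonneg ‖x‖]) (by linarith)

lemma sq_rpow_half (a s : ℝ) (ha : 0 ≤ a) : (a ^ 2 : ℝ) ^ (s / 2) = a ^ s := by
  rw [← Real.rpow_natCast a 2, ← Real.rpow_mul ha]
  norm_num
  rw [mul_div_cancel₀ _ (two_ne_zero)]

lemma wgt_ge_outside (hs : 0 < s) {δ : ℝ} (hδ : 0 < δ) {x : EuclideanSpace ℝ (Fin n)}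
    (hx : δ ^ (-1 / s) ≤ ‖x‖) : δ⁻¹ ≤ wgt n s x := by
  have h1 : (δ ^ (-1/s)) ^ s = δ⁻¹ := by
    rw [← Real.rpow_mul hδ.le, div_mul_cancel₀ _ (ne_of_gt hs), Real.rpow_neg_one]
  calc δ⁻¹ = (δ ^ (-1/s)) ^ s := h1.symm
    _ ≤ ‖x‖ ^ s := Real.rpow_le_rpow (Real.rpow_nonneg hδ.le _) hx hs.le
    _ = (‖x‖ ^ 2) ^ (s/2) := (sq_rpow_half _ _ (norm_nonneg x)).symm
    _ ≤ (1 + ‖x‖ ^ 2) ^ (s/2) :=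
        Real.rpow_le_rpow (by positivity) (by linarith) (by linarith)

lemma wgt_le_outside (hs : s < 0) {δ : ℝ} (hδ : 0 < δ) {x : EuclideanSpace ℝ (Fin n)}
    (hx : δ ^ (1 / s) ≤ ‖x‖) : wgt n s x ≤ δ := by
  have hb : (0:ℝ) < δ ^ (1/s) := Real.rpow_pos_of_pos hδ _
  have hxpos : (0:ℝ) < ‖x‖ := lt_of_lt_of_le hb hx
  have h1 : (δ ^ (1/s)) ^ s = δ := by
    rw [← Real.rpow_mul hδ.le, one_div, inv_mul_cancel₀ (ne_of_lt hs), Real.rpow_one]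
  calc wgt n s x = (1 + ‖x‖ ^ 2) ^ (s/2) := rfl
    _ ≤ (‖x‖ ^ 2) ^ (s/2) :=
        Real.rpow_le_rpow_of_nonpos (by positivity) (by linarith) (by linarith)
    _ = ‖x‖ ^ s := sq_rpow_half _ _ (norm_nonneg x)
    _ ≤ (δ ^ (1/s)) ^ s := Real.rpow_le_rpow_of_nonpos hb hx hs.le
    _ = δ := h1

lemma exp_lip (a b : ℝ) :
    ‖Complex.exp (-Complex.I*a) - Complex.exp (-Complex.I*b)‖ ≤ |a - b| := by
  have h : ∀ t : ℝ, HasDerivAt (fun t : ℝ => Complex.exp (-Complex.I*t))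
      (-Complex.I * Complex.exp (-Complex.I*t)) t := by
    intro t
    have := ((Complex.hasDerivAt_exp (-Complex.I*t)).comp t
      ((hasDerivAt_id t).ofReal_comp.const_mul (-Complex.I)))
    simpa [mul_comm, Function.comp_def] using this
  have := Convex.norm_image_sub_le_of_norm_hasDerivWithin_le
    (f := fun t : ℝ => Complex.exp (-Complex.I*t))
    (f' := fun t : ℝ => -Complex.I * Complex.exp (-Complex.I*t))
    (s := Set.univ) (C := 1) (fun x _ => (h x).hasDerivWithinAt)
    (fun x _ => by simp [Complex.norm_exp]) convex_univ (Set.mem_univ b) (Set.mem_univ a)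
  simpa [Real.norm_eq_abs] using this

lemma norm_exp_inner (a : ℝ) : ‖Complex.exp (-Complex.I * (a:ℂ))‖ = 1 := by
  simp [Complex.norm_exp]

lemma cst_pos : (0:ℝ) < (2 * Real.pi) ^ (-(n : ℝ) / 2) :=
  Real.rpow_pos_of_pos (by positivity) _

lemma kernel_cont (ξ : EuclideanSpace ℝ (Fin n)) :
    Continuous (fun x : EuclideanSpace ℝ (Fin n) =>
      Complex.exp (-Complex.I * ((inner ℝ x ξ : ℝ) : ℂ))) := by
  apply Complex.continuous_exp.comp
  exact continuous_const.mul
    (Complex.continuous_ofReal.comp ((continuous_id).inner continuous_const))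

lemma kernel_integrable {f : EuclideanSpace ℝ (Fin n) → ℂ} (hf : Integrable f volume)
    (ξ : EuclideanSpace ℝ (Fin n)) :
    Integrable (fun x => Complex.exp (-Complex.I * ((inner ℝ x ξ : ℝ) : ℂ)) * f x) volume := by
  refine hf.bdd_mul (c := 1) (kernel_cont ξ).aestronglyMeasurable (ae_of_all _ fun x => ?_)
  exact le_of_eq (norm_exp_inner _)

lemma FT_bound {f : EuclideanSpace ℝ (Fin n) → ℂ} (hf : Integrable f volume)
    {V : ℝ} (hV : ∫ x, ‖f x‖ ≤ V) (ξ : EuclideanSpace ℝ (Fin n)) :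
    ‖FT n f ξ‖ ≤ (2 * Real.pi) ^ (-(n : ℝ) / 2) * V := by
  rw [FT, norm_smul, Real.norm_eq_abs, abs_of_pos cst_pos]
  refine mul_le_mul_of_nonneg_left ?_ cst_pos.le
  calc ‖∫ x, Complex.exp (-Complex.I * ((inner ℝ x ξ : ℝ) : ℂ)) * f x‖
      ≤ ∫ x, ‖Complex.exp (-Complex.I * ((inner ℝ x ξ : ℝ) : ℂ)) * f x‖ :=
        norm_integral_le_integral_norm _
    _ = ∫ x, ‖f x‖ := by
        congr 1; funext x; rw [norm_mul, norm_exp_inner, one_mul]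
    _ ≤ V := hV

lemma FT_lip {f : EuclideanSpace ℝ (Fin n) → ℂ} (hf : Integrable f volume)
    {R V : ℝ} (hV : ∫ x, ‖f x‖ ≤ V)
    (hsupp : ∀ x, f x ≠ 0 → ‖x‖ ≤ R) (hR : 0 ≤ R)
    (ξ η : EuclideanSpace ℝ (Fin n)) :
    ‖FT n f ξ - FT n f η‖ ≤ (2 * Real.pi) ^ (-(n : ℝ) / 2) * (R * V) * ‖ξ - η‖ := by
  simp only [FT]
  rw [← smul_sub, ← integral_sub (kernel_integrable hf ξ) (kernel_integrable hf η),
    norm_smul, Real.norm_eq_abs, abs_of_pos cst_pos]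
  rw [mul_assoc, mul_assoc]
  refine mul_le_mul_of_nonneg_left ?_ cst_pos.le
  have key : ∀ x, ‖Complex.exp (-Complex.I * ((inner ℝ x ξ : ℝ) : ℂ)) * f x -
      Complex.exp (-Complex.I * ((inner ℝ x η : ℝ) : ℂ)) * f x‖ ≤ R * ‖ξ - η‖ * ‖f x‖ := by
    intro x
    by_cases hx : f x = 0
    · simp [hx]
    · rw [← sub_mul, norm_mul]
      refine mul_le_mul_of_nonneg_right ?_ (norm_nonneg _)
      calc ‖Complex.exp (-Complex.I * ((inner ℝ x ξ : ℝ) : ℂ)) -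
            Complex.exp (-Complex.I * ((inner ℝ x η : ℝ) : ℂ))‖
          ≤ |(inner ℝ x ξ : ℝ) - (inner ℝ x η : ℝ)| := exp_lip _ _
        _ = |(inner ℝ x (ξ - η) : ℝ)| := by rw [inner_sub_right]
        _ ≤ ‖x‖ * ‖ξ - η‖ := abs_real_inner_le_norm x (ξ - η)
        _ ≤ R * ‖ξ - η‖ :=
            mul_le_mul_of_nonneg_right (hsupp x hx) (norm_nonneg _)
  calc ‖∫ x, (Complex.exp (-Complex.I * ((inner ℝ x ξ : ℝ) : ℂ)) * f x -
        Complex.exp (-Complex.I * ((inner ℝ x η : ℝ) : ℂ)) * f x)‖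
      ≤ ∫ x, R * ‖ξ - η‖ * ‖f x‖ := by
        refine (norm_integral_le_integral_norm _).trans ?_
        refine integral_mono ((kernel_integrable hf ξ).sub (kernel_integrable hf η)).norm
          ((hf.norm.const_mul _)) key
    _ = R * ‖ξ - η‖ * ∫ x, ‖f x‖ := integral_const_mul _ _
    _ ≤ R * ‖ξ - η‖ * V := by
        refine mul_le_mul_of_nonneg_left hV (by positivity)
    _ = R * (V * ‖ξ - η‖) := by ring

lemma eLpNorm_coe_eq {α : Type*} [MeasurableSpace α] {μ : Measure α} (p : ℝ≥0∞)
    (h : Lp ℂ p μ) : eLpNorm (⇑h) p μ = (‖h‖₊ : ℝ≥0∞) := by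
  rw [Lp.nnnorm_def, ENNReal.coe_toNNReal (Lp.eLpNorm_ne_top h)]

lemma coeFn_finset_sum {α : Type*} [MeasurableSpace α] {μ : Measure α} {ι : Type*}
    (p : ℝ≥0∞) [Fact (1 ≤ p)] (s : Finset ι) (f : ι → Lp ℂ p μ) :
    ⇑(∑ i ∈ s, f i) =ᵐ[μ] fun x => ∑ i ∈ s, f i x := by
  classical
  induction s using Finset.induction_on with
  | empty => simp only [Finset.sum_empty]; exact Lp.coeFn_zero ℂ p μ
  | insert _ _ hni ih =>
      rename_i a s
      rw [Finset.sum_insert hni]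
      filter_upwards [Lp.coeFn_add (f a) (∑ i ∈ s, f i), ih] with x hx hx2
      rw [hx]
      simp only [Pi.add_apply, hx2, Finset.sum_insert hni]

end FCaux

namespace FCaux

open Metric Set

variable {n : ℕ}

local notation "Eu" => EuclideanSpace ℝ (Fin n)
local notation "HS" => Lp ℂ 2 (volume : Measure (EuclideanSpace ℝ (Fin n)))

set_option maxHeartbeats 1000000 in
lemma net (s₁ s₂ : ℝ) (h₁ : 0 < s₁) (h₂ : s₂ < 0)
    (Φ : HS ≃ₗᵢ[ℂ] HS)
    (hΦ : ∀ (f : Eu → ℂ) (hf : Integrable f volume) (h2 : MemLp f 2 volume),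
      (Φ (h2.toLp f) : Eu → ℂ) =ᵐ[volume] FT n f)
    (δ : ℝ) (hδ : 0 < δ) :
    ∃ W : Finset HS, ∀ g : HS,
      eLpNorm (fun x => (wgt n s₁ x : ℂ) * (g : Eu → ℂ) x) 2 volume ≤ 1 →
      ∃ w ∈ W, eLpNorm (fun ξ => (wgt n s₂ ξ : ℂ) * (Φ g : Eu → ℂ) ξ - (w : Eu → ℂ) ξ)
        2 volume < ENNReal.ofReal (4 * δ) := by
  classical
  -- space cutoff radius
  set R : ℝ := δ ^ (-1 / s₁) with hRdef
  have hR : 0 < R := Real.rpow_pos_of_pos hδ _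
  set B : Set Eu := Metric.closedBall 0 R with hBdef
  -- frequency cutoff radius
  set R' : ℝ := δ ^ (1 / s₂) with hR'def
  set K : Set Eu := Metric.closedBall 0 R' with hKdef
  have hKmeas : MeasurableSet K := measurableSet_closedBall
  have hvK : volume K ≠ ∞ := measure_closedBall_lt_top.ne
  have hvB : volume B ≠ ∞ := measure_closedBall_lt_top.ne
  -- constants
  set cst : ℝ := (2 * Real.pi) ^ (-(n : ℝ) / 2) with hcstdef
  have hcst : 0 < cst := cst_pos
  set Λ : ℝ≥0∞ := (volume B) ^ ((1:ℝ)/2) with hΛdef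
  have hΛfin : Λ ≠ ∞ := by
    simp only [hΛdef]
    exact (ENNReal.rpow_lt_top_of_nonneg (by norm_num) hvB).ne
  set Λr : ℝ := Λ.toReal with hΛrdef
  have hΛr0 : 0 ≤ Λr := ENNReal.toReal_nonneg
  set M : ℝ := cst * Λr with hMdef
  set LipC : ℝ := cst * (R * Λr) with hLipdef
  have hLipC0 : 0 ≤ LipC := by positivity
  set vKr : ℝ := ((volume K) ^ ((1:ℝ)/2)).toReal with hvKrdef
  have hvKr0 : 0 ≤ vKr := ENNReal.toReal_nonneg
  set r : ℝ := δ / ((LipC + 1) * (vKr + 1)) with hrdef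
  have hr : 0 < r := by
    apply div_pos hδ
    positivity
  -- finite cover of K by balls of radius r
  obtain ⟨tset, htfin, htcov⟩ :=
    (Metric.totallyBounded_iff).1 (isCompact_closedBall (0:Eu) R').totallyBounded r hr
  set tF : Finset Eu := htfin.toFinset with htFdef
  set N : ℕ := tF.card with hNdef
  set ξj : Fin N → Eu := fun j => (tF.equivFin.symm j : Eu) with hξjdef
  have cover' : ∀ x ∈ K, ∃ j : Fin N, x ∈ Metric.ball (ξj j) r := by
    intro x hx
    obtain ⟨y, hyt, hxy⟩ := Set.mem_iUnion₂.1 (htcov hx)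
    refine ⟨tF.equivFin ⟨y, htfin.mem_toFinset.2 hyt⟩, ?_⟩
    simpa [hξjdef, Equiv.symm_apply_apply] using hxy
  -- the partition pieces
  set Q : Fin N → Set Eu := fun j =>
    (K ∩ Metric.ball (ξj j) r) \ ⋃ i, ⋃ (_ : i < j), Metric.ball (ξj i) r with hQdef
  have hQmeas : ∀ j, MeasurableSet (Q j) := fun j =>
    (hKmeas.inter measurableSet_ball).diff
      (MeasurableSet.iUnion fun i => MeasurableSet.iUnion fun _ => measurableSet_ball)
  have hQK : ∀ j, Q j ⊆ K := fun j x hx => hx.1.1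
  have huniq : ∀ x ∈ K, ∃ j₀ : Fin N, x ∈ Q j₀ ∧ (∀ i, i ≠ j₀ → x ∉ Q i) ∧
      dist x (ξj j₀) < r := by
    intro x hx
    have hne : (Finset.univ.filter (fun j => x ∈ Metric.ball (ξj j) r)).Nonempty := by
      obtain ⟨j, hj⟩ := cover' x hx
      exact ⟨j, Finset.mem_filter.2 ⟨Finset.mem_univ j, hj⟩⟩
    set j₀ := (Finset.univ.filter (fun j => x ∈ Metric.ball (ξj j) r)).min' hne with hj₀def
    have hj₀mem : x ∈ Metric.ball (ξj j₀) r := by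
      exact (Finset.mem_filter.1
        ((Finset.univ.filter (fun j => x ∈ Metric.ball (ξj j) r)).min'_mem hne)).2
    have hlt : ∀ i, i < j₀ → x ∉ Metric.ball (ξj i) r := by
      intro i hi hmem
      have : j₀ ≤ i := Finset.min'_le _ _ (Finset.mem_filter.2 ⟨Finset.mem_univ i, hmem⟩)
      exact absurd hi (not_lt.2 this)
    refine ⟨j₀, ⟨⟨hx, hj₀mem⟩, ?_⟩, ?_, ?_⟩
    · simp only [Set.mem_iUnion, not_exists]
      intro i hilt
      exact hlt i hilt
    · intro i hi hQi
      rcases lt_or_gt_of_ne hi with hlt' | hgt'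
      · exact (hlt i hlt' hQi.1.2).elim
      · have : x ∉ ⋃ k, ⋃ (_ : k < i), Metric.ball (ξj k) r := hQi.2
        simp only [Set.mem_iUnion, not_exists] at this
        exact this j₀ hgt' hj₀mem
    · exact Metric.mem_ball.1 hj₀mem
  -- the L² elements e j
  have hw2cont : Continuous fun ζ : Eu => ((wgt n s₂ ζ : ℝ) : ℂ) :=
    Complex.continuous_ofReal.comp continuous_wgt
  have mem_e : ∀ j, MemLp ((Q j).indicator fun ζ => ((wgt n s₂ ζ : ℝ) : ℂ)) 2
      (volume : Measure Eu) := by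
    intro j
    refine MemLp.of_le (memLp_indicator_const 2 hKmeas (1:ℝ) (Or.inr hvK))
      (hw2cont.aestronglyMeasurable.indicator (hQmeas j)) (ae_of_all _ fun ζ => ?_)
    by_cases hζ : ζ ∈ Q j
    · rw [Set.indicator_of_mem hζ, Set.indicator_of_mem (hQK j hζ)]
      simp only [Complex.norm_real, Real.norm_eq_abs, norm_one]
      rw [abs_of_pos (wgt_pos ζ)]
      exact wgt_le_one h₂.le ζ
    · rw [Set.indicator_of_notMem hζ]
      simp [norm_nonneg]
  set e : Fin N → HS := fun j => (mem_e j).toLp _ with hedef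
  set ψ : (Fin N → ℂ) → HS := fun c => ∑ j, c j • e j with hψdef
  have hψcont : Continuous ψ := by
    apply continuous_finset_sum
    exact fun j _ => (continuous_apply j).smul continuous_const
  set D : Set HS := ψ '' (Set.univ.pi fun _ : Fin N => Metric.closedBall (0:ℂ) M) with hDdef
  have hDcp : IsCompact D :=
    (isCompact_univ_pi fun _ => isCompact_closedBall _ _).image hψcont
  obtain ⟨t₂, ht₂fin, ht₂cov⟩ := (Metric.totallyBounded_iff).1 hDcp.totallyBounded δ hδ
  refine ⟨ht₂fin.toFinset, ?_⟩
  intro g hg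
  -- basic norms of g
  have hgnorm : eLpNorm (⇑g) 2 volume ≤ 1 := by
    refine le_trans (eLpNorm_mono fun x => ?_) hg
    rw [norm_wgt_mul]
    exact le_mul_of_one_le_left (norm_nonneg _) (one_le_wgt h₁.le x)
  -- truncation of g
  set g1 : Eu → ℂ := B.indicator ⇑g with hg1def
  have hmem2 : MemLp g1 2 (volume : Measure Eu) :=
    MemLp.indicator measurableSet_closedBall (Lp.memLp g)
  have hint : Integrable g1 volume := by
    refine memLp_one_iff_integrable.1 (hmem2.mono_exponent_of_measure_support_ne_top
      (fun x hx => Set.indicator_of_notMem hx _) hvB one_le_two)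
  set g1L : HS := hmem2.toLp g1 with hg1Ldef
  have hΦg1 : (Φ g1L : Eu → ℂ) =ᵐ[volume] FT n g1 := hΦ g1 hint hmem2
  have hsn1 : eLpNorm g1 2 volume ≤ 1 :=
    le_trans (eLpNorm_mono fun x => norm_indicator_le_norm_self (⇑g) x) hgnorm
  -- L¹ bound for g1
  have hL1e : eLpNorm g1 1 volume ≤ Λ := by
    rw [hg1def, eLpNorm_indicator_eq_eLpNorm_restrict measurableSet_closedBall]
    refine le_trans (eLpNorm_le_eLpNorm_mul_rpow_measure_univ (p := 1) (q := 2) one_le_two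
      ((Lp.aestronglyMeasurable g).restrict)) ?_
    have h1 : eLpNorm (⇑g) 2 (volume.restrict B) ≤ 1 := by
      rw [← eLpNorm_indicator_eq_eLpNorm_restrict measurableSet_closedBall]
      exact hsn1
    have h2 : (volume.restrict B) Set.univ = volume B := by
      simp [Measure.restrict_apply_univ]
    rw [h2]
    calc eLpNorm (⇑g) 2 (volume.restrict B) * volume B ^ (1 / (1:ℝ≥0∞).toReal - 1 / (2:ℝ≥0∞).toReal)
        ≤ 1 * volume B ^ ((1:ℝ)/2) := by
          refine mul_le_mul' h1 (le_of_eq ?_)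
          norm_num
      _ = Λ := by rw [one_mul]
  have hL1 : ∫ x, ‖g1 x‖ ≤ Λr := by
    have heq : ∫ x, ‖g1 x‖ = (eLpNorm g1 1 volume).toReal := by
      rw [integral_norm_eq_lintegral_enorm hint.aestronglyMeasurable,
        eLpNorm_one_eq_lintegral_enorm]
    rw [heq, hΛrdef]
    exact ENNReal.toReal_mono hΛfin hL1e
  -- the coefficients
  set c : Fin N → ℂ := fun j => FT n g1 (ξj j) with hcdef
  have hcball : ∀ j, c j ∈ Metric.closedBall (0:ℂ) M := by
    intro j
    rw [Metric.mem_closedBall, dist_zero_right]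
    exact FT_bound hint hL1 (ξj j)
  have hψmem : ψ c ∈ D := ⟨c, fun j _ => hcball j, rfl⟩
  obtain ⟨w, hwt₂, hwdist⟩ := Set.mem_iUnion₂.1 (ht₂cov hψmem)
  refine ⟨w, ht₂fin.mem_toFinset.2 hwt₂, ?_⟩
  have hwd : ‖ψ c - w‖ < δ := by
    rw [← dist_eq_norm]
    exact Metric.mem_ball.1 hwdist
  -- measurability of the pieces
  have hAAsm : AEStronglyMeasurable (fun ξ : Eu => ∑ j, (Q j).indicator (fun ζ => c j * (wgt n s₂ ζ : ℂ)) ξ) (volume : Measure Eu) := by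
    refine Finset.aestronglyMeasurable_fun_sum _ fun j _ => ?_
    exact ((continuous_const.mul hw2cont).aestronglyMeasurable.indicator (hQmeas j))
  have hsm1 : AEStronglyMeasurable (fun ξ : Eu => (wgt n s₂ ξ : ℂ) * (Φ g : Eu → ℂ) ξ - (wgt n s₂ ξ : ℂ) * (Φ g1L : Eu → ℂ) ξ) (volume : Measure Eu) :=
    (hw2cont.aestronglyMeasurable.mul (Lp.aestronglyMeasurable (Φ g))).sub
      (hw2cont.aestronglyMeasurable.mul (Lp.aestronglyMeasurable (Φ g1L)))
  have hsm2 : AEStronglyMeasurable (Kᶜ.indicator (fun ξ : Eu => (wgt n s₂ ξ : ℂ) * (Φ g1L : Eu → ℂ) ξ)) (volume : Measure Eu) :=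
    (hw2cont.aestronglyMeasurable.mul (Lp.aestronglyMeasurable (Φ g1L))).indicator
      hKmeas.compl
  have hsm3 : AEStronglyMeasurable (fun ξ : Eu => K.indicator (fun ζ => (wgt n s₂ ζ : ℂ) * (Φ g1L : Eu → ℂ) ζ) ξ - (fun ξ : Eu => ∑ j, (Q j).indicator (fun ζ => c j * (wgt n s₂ ζ : ℂ)) ξ) ξ) (volume : Measure Eu) :=
    ((hw2cont.aestronglyMeasurable.mul (Lp.aestronglyMeasurable (Φ g1L))).indicator
      hKmeas).sub hAAsm
  have hsm4 : AEStronglyMeasurable (fun ξ : Eu => (fun ξ : Eu => ∑ j, (Q j).indicator (fun ζ => c j * (wgt n s₂ ζ : ℂ)) ξ) ξ - (w : Eu → ℂ) ξ) (volume : Measure Eu) :=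
    hAAsm.sub (Lp.aestronglyMeasurable w)
  -- bound 1 : spatial tail
  have hb1 : eLpNorm (fun ξ : Eu => (wgt n s₂ ξ : ℂ) * (Φ g : Eu → ℂ) ξ - (wgt n s₂ ξ : ℂ) * (Φ g1L : Eu → ℂ) ξ) 2 volume ≤ ENNReal.ofReal δ := by
    calc eLpNorm (fun ξ : Eu => (wgt n s₂ ξ : ℂ) * (Φ g : Eu → ℂ) ξ - (wgt n s₂ ξ : ℂ) * (Φ g1L : Eu → ℂ) ξ) 2 volume
        ≤ eLpNorm (fun ξ : Eu => (Φ g : Eu → ℂ) ξ - (Φ g1L : Eu → ℂ) ξ) 2 volume := by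
          refine eLpNorm_mono fun ξ => ?_
          rw [← mul_sub, norm_wgt_mul]
          exact mul_le_of_le_one_left (norm_nonneg _) (wgt_le_one h₂.le ξ)
      _ = eLpNorm (⇑(Φ g - Φ g1L)) 2 volume :=
          (eLpNorm_congr_ae (Lp.coeFn_sub (Φ g) (Φ g1L))).symm
      _ = eLpNorm (⇑(Φ (g - g1L))) 2 volume := by rw [← map_sub]
      _ = eLpNorm (⇑(g - g1L)) 2 volume := by
          rw [eLpNorm_coe_eq, eLpNorm_coe_eq, Φ.nnnorm_map]
      _ = eLpNorm (fun x : Eu => (g : Eu → ℂ) x - g1 x) 2 volume := by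
          refine eLpNorm_congr_ae ?_
          filter_upwards [Lp.coeFn_sub g g1L, (hmem2.coeFn_toLp : ⇑g1L =ᵐ[volume] g1)]
            with x hx h2x
          rw [hx, Pi.sub_apply, h2x]
      _ ≤ eLpNorm ((δ:ℝ) • fun x : Eu => ((wgt n s₁ x : ℂ) * (g : Eu → ℂ) x)) 2 volume := by
          refine eLpNorm_mono fun x => ?_
          simp only [Pi.smul_apply, norm_smul, Real.norm_eq_abs, abs_of_pos hδ, norm_wgt_mul]
          by_cases hx : x ∈ B
          · rw [hg1def, Set.indicator_of_mem hx, sub_self, norm_zero]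
            exact mul_nonneg hδ.le (mul_nonneg (wgt_pos x).le (norm_nonneg _))
          · rw [hg1def, Set.indicator_of_notMem hx, sub_zero]
            have hRx : R ≤ ‖x‖ := by
              by_contra hcon
              exact hx (mem_closedBall_zero_iff.2 (le_of_not_ge hcon))
            have hge : δ⁻¹ ≤ wgt n s₁ x := wgt_ge_outside h₁ hδ hRx
            have h1 : 1 ≤ δ * wgt n s₁ x := by
              have := mul_le_mul_of_nonneg_left hge hδ.le
              rwa [mul_inv_cancel₀ (ne_of_gt hδ)] at this
            calc ‖(g : Eu → ℂ) x‖ = 1 * ‖(g : Eu → ℂ) x‖ := (one_mul _).symm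
              _ ≤ (δ * wgt n s₁ x) * ‖(g : Eu → ℂ) x‖ :=
                  mul_le_mul_of_nonneg_right h1 (norm_nonneg _)
              _ = δ * (wgt n s₁ x * ‖(g : Eu → ℂ) x‖) := by ring
      _ ≤ ‖(δ:ℝ)‖ₑ * eLpNorm (fun x : Eu => ((wgt n s₁ x : ℂ) * (g : Eu → ℂ) x)) 2 volume :=
          eLpNorm_const_smul_le
      _ ≤ ENNReal.ofReal δ := by
          rw [Real.enorm_eq_ofReal hδ.le]
          calc ENNReal.ofReal δ *
              eLpNorm (fun x : Eu => ((wgt n s₁ x : ℂ) * (g : Eu → ℂ) x)) 2 volume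
              ≤ ENNReal.ofReal δ * 1 := mul_le_mul_right hg _
            _ = ENNReal.ofReal δ := mul_one _
  -- bound 2 : frequency tail
  have hΦg1n : eLpNorm (⇑(Φ g1L)) 2 volume ≤ 1 := by
    rw [eLpNorm_coe_eq, Φ.nnnorm_map, ← eLpNorm_coe_eq]
    exact le_trans (le_of_eq (eLpNorm_congr_ae hmem2.coeFn_toLp)) hsn1
  have hb2 : eLpNorm (Kᶜ.indicator (fun ξ : Eu => (wgt n s₂ ξ : ℂ) * (Φ g1L : Eu → ℂ) ξ)) 2 volume ≤ ENNReal.ofReal δ := by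
    calc eLpNorm (Kᶜ.indicator (fun ξ : Eu => (wgt n s₂ ξ : ℂ) * (Φ g1L : Eu → ℂ) ξ)) 2 volume
        ≤ eLpNorm ((δ:ℝ) • fun ξ : Eu => (Φ g1L : Eu → ℂ) ξ) 2 volume := by
          refine eLpNorm_mono fun ξ => ?_
          simp only [Pi.smul_apply, norm_smul, Real.norm_eq_abs, abs_of_pos hδ]
          by_cases hξ : ξ ∈ Kᶜ
          · rw [Set.indicator_of_mem hξ, norm_wgt_mul]
            refine mul_le_mul_of_nonneg_right ?_ (norm_nonneg _)
            refine wgt_le_outside h₂ hδ ?_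
            by_contra hcon
            exact hξ (mem_closedBall_zero_iff.2 (le_of_not_ge hcon))
          · rw [Set.indicator_of_notMem hξ, norm_zero]
            positivity
      _ ≤ ‖(δ:ℝ)‖ₑ * eLpNorm (fun ξ : Eu => (Φ g1L : Eu → ℂ) ξ) 2 volume :=
          eLpNorm_const_smul_le
      _ ≤ ENNReal.ofReal δ := by
          rw [Real.enorm_eq_ofReal hδ.le]
          calc ENNReal.ofReal δ * eLpNorm (fun ξ : Eu => (Φ g1L : Eu → ℂ) ξ) 2 volume
              ≤ ENNReal.ofReal δ * 1 := mul_le_mul_right hΦg1n _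
            _ = ENNReal.ofReal δ := mul_one _
  -- bound 3 : piecewise-constant approximation on K
  have hsupp1 : ∀ x, g1 x ≠ 0 → ‖x‖ ≤ R := by
    intro x hx
    by_contra hcon
    exact hx (by rw [hg1def, Set.indicator_of_notMem
      (fun hmem => hcon (mem_closedBall_zero_iff.1 hmem))])
  have hb3 : eLpNorm (fun ξ : Eu => K.indicator (fun ζ => (wgt n s₂ ζ : ℂ) * (Φ g1L : Eu → ℂ) ζ) ξ - (fun ξ : Eu => ∑ j, (Q j).indicator (fun ζ => c j * (wgt n s₂ ζ : ℂ)) ξ) ξ) 2 volume ≤ ENNReal.ofReal δ := by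
    have hcongr : (fun ξ : Eu => K.indicator (fun ζ => (wgt n s₂ ζ : ℂ) * (Φ g1L : Eu → ℂ) ζ) ξ - (fun ξ : Eu => ∑ j, (Q j).indicator (fun ζ => c j * (wgt n s₂ ζ : ℂ)) ξ) ξ) =ᵐ[volume]
        (fun ξ : Eu => K.indicator (fun ζ => (wgt n s₂ ζ : ℂ) * FT n g1 ζ) ξ - (fun ξ : Eu => ∑ j, (Q j).indicator (fun ζ => c j * (wgt n s₂ ζ : ℂ)) ξ) ξ) := by
      filter_upwards [hΦg1] with ξ hξ
      by_cases hmem : ξ ∈ K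
      · rw [Set.indicator_of_mem hmem, Set.indicator_of_mem hmem, hξ]
      · rw [Set.indicator_of_notMem hmem, Set.indicator_of_notMem hmem]
    rw [eLpNorm_congr_ae hcongr]
    refine le_trans (eLpNorm_mono
      (g := fun ξ : Eu => K.indicator (fun _ : Eu => (LipC * r : ℝ)) ξ) fun ξ => ?_) ?_
    · by_cases hξK : ξ ∈ K
      · obtain ⟨j₀, hQ₀, huni, hdist⟩ := huniq ξ hξK
        have hA : ∑ j, (Q j).indicator (fun ζ => c j * (wgt n s₂ ζ : ℂ)) ξ = c j₀ * (wgt n s₂ ξ : ℂ) := by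
          rw [Finset.sum_eq_single j₀
            (fun i _ hi => Set.indicator_of_notMem (huni i hi) _)
            (fun h => absurd (Finset.mem_univ j₀) h)]
          exact Set.indicator_of_mem hQ₀ _
        simp only [Set.indicator_of_mem hξK, hA]
        have heq : (wgt n s₂ ξ : ℂ) * FT n g1 ξ - c j₀ * (wgt n s₂ ξ : ℂ)
            = (wgt n s₂ ξ : ℂ) * (FT n g1 ξ - c j₀) := by ring
        have hRHS : ‖(LipC * r : ℝ)‖ = LipC * r := by
          rw [Real.norm_eq_abs, _root_.abs_of_nonneg (mul_nonneg hLipC0 hr.le)]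
        rw [heq, norm_wgt_mul, hRHS]
        calc wgt n s₂ ξ * ‖FT n g1 ξ - c j₀‖ ≤ 1 * ‖FT n g1 ξ - c j₀‖ :=
              mul_le_mul_of_nonneg_right (wgt_le_one h₂.le ξ) (norm_nonneg _)
          _ = ‖FT n g1 ξ - FT n g1 (ξj j₀)‖ := one_mul _
          _ ≤ cst * (R * Λr) * ‖ξ - ξj j₀‖ := FT_lip hint hL1 hsupp1 hR.le ξ (ξj j₀)
          _ = LipC * ‖ξ - ξj j₀‖ := by rw [hLipdef]
          _ ≤ LipC * r := mul_le_mul_of_nonneg_left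
              (by rw [← dist_eq_norm]; exact hdist.le) hLipC0
      · have hA0 : ∑ j, (Q j).indicator (fun ζ => c j * (wgt n s₂ ζ : ℂ)) ξ = (0:ℂ) :=
          Finset.sum_eq_zero fun j _ =>
            Set.indicator_of_notMem (fun h => hξK (hQK j h)) _
        simp [Set.indicator_of_notMem hξK, hA0]
    · rw [eLpNorm_indicator_const hKmeas two_ne_zero ENNReal.ofNat_ne_top]
      have h2r : (1 : ℝ) / (2:ℝ≥0∞).toReal = (1:ℝ)/2 := by norm_num
      rw [h2r]
      have hKval : (volume K) ^ ((1:ℝ)/2) = ENNReal.ofReal vKr := by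
        rw [hvKrdef, ENNReal.ofReal_toReal]
        exact (ENNReal.rpow_lt_top_of_nonneg (by norm_num) hvK).ne
      rw [hKval, Real.enorm_eq_ofReal (by positivity), ← ENNReal.ofReal_mul (by positivity)]
      refine ENNReal.ofReal_le_ofReal ?_
      have hP : (0:ℝ) < (LipC + 1) * (vKr + 1) := by positivity
      have hfrac : LipC * r * vKr = (LipC * vKr / ((LipC + 1) * (vKr + 1))) * δ := by
        rw [hrdef]; ring
      rw [hfrac]
      have hle1 : LipC * vKr / ((LipC + 1) * (vKr + 1)) ≤ 1 := by
        rw [div_le_one hP]; nlinarith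
      calc (LipC * vKr / ((LipC + 1) * (vKr + 1))) * δ ≤ 1 * δ :=
            mul_le_mul_of_nonneg_right hle1 hδ.le
        _ = δ := one_mul δ
  -- bound 4 : distance to the net point
  have hψcoe : ⇑(ψ c) =ᵐ[volume] (fun ξ : Eu => ∑ j, (Q j).indicator (fun ζ => c j * (wgt n s₂ ζ : ℂ)) ξ) := by
    refine (coeFn_finset_sum 2 Finset.univ (fun j => c j • e j)).trans ?_
    have hall : ∀ᵐ ξ ∂(volume : Measure Eu), ∀ j : Fin N,
        (c j • e j : HS) ξ = (Q j).indicator (fun ζ => c j * (wgt n s₂ ζ : ℂ)) ξ := by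
      rw [MeasureTheory.ae_all_iff]
      intro j
      filter_upwards [Lp.coeFn_smul (c j) (e j), (mem_e j).coeFn_toLp] with ξ h1 h2
      rw [h1, Pi.smul_apply, h2]
      by_cases hξ : ξ ∈ Q j
      · rw [Set.indicator_of_mem hξ, Set.indicator_of_mem hξ, smul_eq_mul]
      · rw [Set.indicator_of_notMem hξ, Set.indicator_of_notMem hξ, smul_zero]
    filter_upwards [hall] with ξ h
    exact Finset.sum_congr rfl fun j _ => h j
  have hb4 : eLpNorm (fun ξ : Eu => (fun ξ : Eu => ∑ j, (Q j).indicator (fun ζ => c j * (wgt n s₂ ζ : ℂ)) ξ) ξ - (w : Eu → ℂ) ξ) 2 volume < ENNReal.ofReal δ := by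
    have hae : (fun ξ : Eu => (fun ξ : Eu => ∑ j, (Q j).indicator (fun ζ => c j * (wgt n s₂ ζ : ℂ)) ξ) ξ - (w : Eu → ℂ) ξ) =ᵐ[volume] ⇑(ψ c - w) := by
      filter_upwards [Lp.coeFn_sub (ψ c) w, hψcoe] with ξ h1 h2
      rw [h1, Pi.sub_apply, h2]
    rw [eLpNorm_congr_ae hae, eLpNorm_coe_eq, ← enorm_eq_nnnorm, ← ofReal_norm]
    exact (ENNReal.ofReal_lt_ofReal_iff hδ).2 hwd
  -- assembly
  have hdec : ∀ (a b i1 i2 A W : ℂ), i1 + i2 = b →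
      a - W = (((a - b) + i2) + (i1 - A)) + (A - W) := by
    intro a b i1 i2 A W h
    rw [← h]; ring
  calc eLpNorm (fun ξ => (wgt n s₂ ξ : ℂ) * (Φ g : Eu → ℂ) ξ - (w : Eu → ℂ) ξ) 2 volume
      = eLpNorm ((((fun ξ : Eu => (wgt n s₂ ξ : ℂ) * (Φ g : Eu → ℂ) ξ - (wgt n s₂ ξ : ℂ) * (Φ g1L : Eu → ℂ) ξ) + (Kᶜ.indicator (fun ξ : Eu => (wgt n s₂ ξ : ℂ) * (Φ g1L : Eu → ℂ) ξ))) + (fun ξ : Eu => K.indicator (fun ζ => (wgt n s₂ ζ : ℂ) * (Φ g1L : Eu → ℂ) ζ) ξ - (fun ξ : Eu => ∑ j, (Q j).indicator (fun ζ => c j * (wgt n s₂ ζ : ℂ)) ξ) ξ)) + (fun ξ : Eu => (fun ξ : Eu => ∑ j, (Q j).indicator (fun ζ => c j * (wgt n s₂ ζ : ℂ)) ξ) ξ - (w : Eu → ℂ) ξ)) 2 volume := by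
        refine eLpNorm_congr_ae (ae_of_all _ fun ξ => ?_)
        exact hdec _ _ _ _ _ _ (Set.indicator_self_add_compl_apply K _ ξ)
    _ ≤ eLpNorm (((fun ξ : Eu => (wgt n s₂ ξ : ℂ) * (Φ g : Eu → ℂ) ξ - (wgt n s₂ ξ : ℂ) * (Φ g1L : Eu → ℂ) ξ) + (Kᶜ.indicator (fun ξ : Eu => (wgt n s₂ ξ : ℂ) * (Φ g1L : Eu → ℂ) ξ))) + (fun ξ : Eu => K.indicator (fun ζ => (wgt n s₂ ζ : ℂ) * (Φ g1L : Eu → ℂ) ζ) ξ - (fun ξ : Eu => ∑ j, (Q j).indicator (fun ζ => c j * (wgt n s₂ ζ : ℂ)) ξ) ξ)) 2 volume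
        + eLpNorm (fun ξ : Eu => (fun ξ : Eu => ∑ j, (Q j).indicator (fun ζ => c j * (wgt n s₂ ζ : ℂ)) ξ) ξ - (w : Eu → ℂ) ξ) 2 volume :=
        eLpNorm_add_le ((hsm1.add hsm2).add hsm3) hsm4 one_le_two
    _ ≤ (eLpNorm ((fun ξ : Eu => (wgt n s₂ ξ : ℂ) * (Φ g : Eu → ℂ) ξ - (wgt n s₂ ξ : ℂ) * (Φ g1L : Eu → ℂ) ξ) + (Kᶜ.indicator (fun ξ : Eu => (wgt n s₂ ξ : ℂ) * (Φ g1L : Eu → ℂ) ξ))) 2 volume + eLpNorm (fun ξ : Eu => K.indicator (fun ζ => (wgt n s₂ ζ : ℂ) * (Φ g1L : Eu → ℂ) ζ) ξ - (fun ξ : Eu => ∑ j, (Q j).indicator (fun ζ => c j * (wgt n s₂ ζ : ℂ)) ξ) ξ) 2 volume)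
        + eLpNorm (fun ξ : Eu => (fun ξ : Eu => ∑ j, (Q j).indicator (fun ζ => c j * (wgt n s₂ ζ : ℂ)) ξ) ξ - (w : Eu → ℂ) ξ) 2 volume :=
        add_le_add_left (eLpNorm_add_le (hsm1.add hsm2) hsm3 one_le_two) _
    _ ≤ ((eLpNorm (fun ξ : Eu => (wgt n s₂ ξ : ℂ) * (Φ g : Eu → ℂ) ξ - (wgt n s₂ ξ : ℂ) * (Φ g1L : Eu → ℂ) ξ) 2 volume + eLpNorm (Kᶜ.indicator (fun ξ : Eu => (wgt n s₂ ξ : ℂ) * (Φ g1L : Eu → ℂ) ξ)) 2 volume)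
        + eLpNorm (fun ξ : Eu => K.indicator (fun ζ => (wgt n s₂ ζ : ℂ) * (Φ g1L : Eu → ℂ) ζ) ξ - (fun ξ : Eu => ∑ j, (Q j).indicator (fun ζ => c j * (wgt n s₂ ζ : ℂ)) ξ) ξ) 2 volume) + eLpNorm (fun ξ : Eu => (fun ξ : Eu => ∑ j, (Q j).indicator (fun ζ => c j * (wgt n s₂ ζ : ℂ)) ξ) ξ - (w : Eu → ℂ) ξ) 2 volume :=
        add_le_add_left (add_le_add_left (eLpNorm_add_le hsm1 hsm2 one_le_two) _) _
    _ ≤ ((ENNReal.ofReal δ + ENNReal.ofReal δ) + ENNReal.ofReal δ)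
        + eLpNorm (fun ξ : Eu => (fun ξ : Eu => ∑ j, (Q j).indicator (fun ζ => c j * (wgt n s₂ ζ : ℂ)) ξ) ξ - (w : Eu → ℂ) ξ) 2 volume := by
        gcongr
    _ < ((ENNReal.ofReal δ + ENNReal.ofReal δ) + ENNReal.ofReal δ) + ENNReal.ofReal δ :=
        ENNReal.add_lt_add_left (by simp [ENNReal.add_ne_top]) hb4
    _ = ENNReal.ofReal (4 * δ) := by
        rw [← ENNReal.ofReal_add hδ.le hδ.le, ← ENNReal.ofReal_add (by positivity) hδ.le,
          ← ENNReal.ofReal_add (by positivity) hδ.le]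
        ring_nf

end FCaux

open FCaux in
set_option maxHeartbeats 1000000 in
/-- Compactness of `F : H^{s₁}(ℝⁿ) → H^{s₂}(ℝⁿ)` for `s₁ > 0 > s₂`.  Here `Φ` is the
Plancherel extension of the Fourier transform to `L_2` (it exists and is unique), so that
`‖f‖_{H^s} = ‖w_s · Φf‖_{L_2}`.  Compactness is expressed as total boundedness of the
image of the `H^{s₁}`-unit ball in the `H^{s₂}` norm. -/
theorem fourier_compact_Hs (n : ℕ) (s₁ s₂ : ℝ) (h₁ : 0 < s₁) (h₂ : s₂ < 0)
    (Φ : Lp ℂ 2 (volume : Measure (EuclideanSpace ℝ (Fin n))) ≃ₗᵢ[ℂ]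
         Lp ℂ 2 (volume : Measure (EuclideanSpace ℝ (Fin n))))
    (hΦ : ∀ (f : EuclideanSpace ℝ (Fin n) → ℂ) (hf : Integrable f volume)
      (h2 : MemLp f 2 volume),
      (Φ (h2.toLp f) : EuclideanSpace ℝ (Fin n) → ℂ) =ᵐ[volume] FT n f) :
    ∀ ε : ℝ≥0∞, 0 < ε →
      ∃ S : Finset (Lp ℂ 2 (volume : Measure (EuclideanSpace ℝ (Fin n)))),
        ∀ u : Lp ℂ 2 (volume : Measure (EuclideanSpace ℝ (Fin n))),
          eLpNorm (fun ξ => (wgt n s₁ ξ : ℂ) * (Φ u : EuclideanSpace ℝ (Fin n) → ℂ) ξ)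
              2 volume ≤ 1 →
            ∃ v ∈ S,
              eLpNorm (fun ξ => (wgt n s₂ ξ : ℂ) *
                  (Φ (Φ u - v) : EuclideanSpace ℝ (Fin n) → ℂ) ξ) 2 volume < ε := by
  classical
  intro ε hε
  have hε'top : min ε 1 ≠ ⊤ := by
    simp [ne_top_of_le_ne_top one_ne_top (min_le_right ε 1)]
  have hε'0 : 0 < min ε 1 := lt_min hε zero_lt_one
  set εr : ℝ := (min ε 1).toReal with hεrdef
  have hεr : 0 < εr := ENNReal.toReal_pos hε'0.ne' hε'top
  set δ : ℝ := εr / 16 with hδdef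
  have hδ : 0 < δ := by positivity
  obtain ⟨W, hW⟩ := FCaux.net s₁ s₂ h₁ h₂ Φ hΦ δ hδ
  set P : Lp ℂ 2 (volume : Measure (EuclideanSpace ℝ (Fin n))) → Prop := fun w =>
    ∃ g : Lp ℂ 2 (volume : Measure (EuclideanSpace ℝ (Fin n))),
      eLpNorm (fun x => (wgt n s₁ x : ℂ) * (g : EuclideanSpace ℝ (Fin n) → ℂ) x) 2 volume ≤ 1
      ∧ eLpNorm (fun ξ => (wgt n s₂ ξ : ℂ) * (Φ g : EuclideanSpace ℝ (Fin n) → ℂ) ξ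
          - (w : EuclideanSpace ℝ (Fin n) → ℂ) ξ) 2 volume < ENNReal.ofReal (4 * δ)
    with hPdef
  refine ⟨W.image (fun w => if h : P w then h.choose else 0), ?_⟩
  intro u hu
  obtain ⟨w, hwW, hwb⟩ := hW (Φ u) hu
  have hPw : P w := ⟨Φ u, hu, hwb⟩
  refine ⟨if h : P w then h.choose else 0, Finset.mem_image_of_mem _ hwW, ?_⟩
  rw [dif_pos hPw]
  obtain ⟨hg'1, hg'2⟩ := hPw.choose_spec
  set g' := hPw.choose with hg'def
  have hw2cont : Continuous fun ζ : EuclideanSpace ℝ (Fin n) => ((wgt n s₂ ζ : ℝ) : ℂ) :=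
    Complex.continuous_ofReal.comp continuous_wgt
  have hcoe : (Φ (Φ u - g') : EuclideanSpace ℝ (Fin n) → ℂ) =ᵐ[volume]
      fun ξ => (Φ (Φ u) : EuclideanSpace ℝ (Fin n) → ℂ) ξ
        - (Φ g' : EuclideanSpace ℝ (Fin n) → ℂ) ξ := by
    rw [map_sub]
    exact Lp.coeFn_sub _ _
  calc eLpNorm (fun ξ => (wgt n s₂ ξ : ℂ) *
          (Φ (Φ u - g') : EuclideanSpace ℝ (Fin n) → ℂ) ξ) 2 volume
      = eLpNorm ((fun ξ => (wgt n s₂ ξ : ℂ) *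
            (Φ (Φ u) : EuclideanSpace ℝ (Fin n) → ℂ) ξ
            - (w : EuclideanSpace ℝ (Fin n) → ℂ) ξ)
          + (fun ξ => (w : EuclideanSpace ℝ (Fin n) → ℂ) ξ
            - (wgt n s₂ ξ : ℂ) * (Φ g' : EuclideanSpace ℝ (Fin n) → ℂ) ξ)) 2 volume := by
        refine eLpNorm_congr_ae ?_
        filter_upwards [hcoe] with ξ h
        simp only [Pi.add_apply]
        rw [h]
        ring
    _ ≤ eLpNorm (fun ξ => (wgt n s₂ ξ : ℂ) *
            (Φ (Φ u) : EuclideanSpace ℝ (Fin n) → ℂ) ξ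
            - (w : EuclideanSpace ℝ (Fin n) → ℂ) ξ) 2 volume
        + eLpNorm (fun ξ => (w : EuclideanSpace ℝ (Fin n) → ℂ) ξ
            - (wgt n s₂ ξ : ℂ) * (Φ g' : EuclideanSpace ℝ (Fin n) → ℂ) ξ) 2 volume :=
        eLpNorm_add_le
          ((hw2cont.aestronglyMeasurable.mul (Lp.aestronglyMeasurable (Φ (Φ u)))).sub
            (Lp.aestronglyMeasurable w))
          ((Lp.aestronglyMeasurable w).sub
            (hw2cont.aestronglyMeasurable.mul (Lp.aestronglyMeasurable (Φ g'))))
          one_le_two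
    _ < ENNReal.ofReal (4 * δ) + ENNReal.ofReal (4 * δ) := by
        refine ENNReal.add_lt_add hwb (lt_of_le_of_lt ?_ hg'2)
        refine eLpNorm_mono fun ξ => ?_
        rw [norm_sub_rev]
    _ ≤ ENNReal.ofReal (εr / 2) := by
        rw [← ENNReal.ofReal_add (by positivity) (by positivity)]
        refine ENNReal.ofReal_le_ofReal ?_
        rw [hδdef]; linarith
    _ < min ε 1 := by
        rw [← ENNReal.ofReal_toReal hε'top, ← hεrdef]
        exact (ENNReal.ofReal_lt_ofReal_iff hεr).2 (by linarith)
    _ ≤ ε := min_le_left ε 1
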